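/- Let γ > 1, L > 0, and let τ, τ̄ be positive reals with τ̄ ≤ L. Define ψ(s) = s^{1-γ}. If τ > 3L then the Taylor remainder ψ(τ) - ψ(τ̄) - ψ'(τ̄)(τ - τ̄) ≥ γ(γ-1)·(1/2)·(1/2)^{1+γ}·(τ - τ̄)^{1-γ}. If τ ≤ 3L then ψ(τ) - ψ(τ̄) - ψ'(τ̄)(τ-τ̄) ≥ (γ(γ-1)/2)·(3L)^{-1-γ}·(τ - τ̄)². -/

import Mathlib

open Real

/-- Tangent-line / strong-convexity lower bound for `x ↦ x^(1-γ)`. -/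
lemma aux_tangent (γ m a b : ℝ) (hγ : 1 < γ) (ha : 0 < a) (hb : 0 < b) (hm : 0 ≤ m)
    (hmb : ∀ x : ℝ, min a b ≤ x → x ≤ max a b → m ≤ γ * (γ - 1) * x ^ (-1 - γ)) :
    b ^ (1 - γ) - a ^ (1 - γ) - (1 - γ) * a ^ (-γ) * (b - a) ≥ m / 2 * (b - a) ^ 2 := by
  set G : ℝ → ℝ := fun x => x ^ (1 - γ) - a ^ (1 - γ) - (1 - γ) * a ^ (-γ) * (x - a)
      - m / 2 * (x - a) ^ 2 with hGdef
  set G' : ℝ → ℝ := fun x => (1 - γ) * x ^ (-γ) - (1 - γ) * a ^ (-γ) - m * (x - a) with hG'def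
  have hpos : ∀ x : ℝ, min a b ≤ x → 0 < x := fun x hx => lt_of_lt_of_le (lt_min ha hb) hx
  have hG : ∀ x : ℝ, 0 < x → HasDerivAt G (G' x) x := by
    intro x hx
    have h1 : HasDerivAt (fun y : ℝ => y ^ (1 - γ)) ((1 - γ) * x ^ (1 - γ - 1)) x :=
      Real.hasDerivAt_rpow_const (Or.inl hx.ne')
    have h2 : HasDerivAt (fun y : ℝ => (1 - γ) * a ^ (-γ) * (y - a))
        ((1 - γ) * a ^ (-γ)) x := by
      simpa using ((hasDerivAt_id x).sub_const a).const_mul ((1 - γ) * a ^ (-γ))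
    have h3 : HasDerivAt (fun y : ℝ => m / 2 * (y - a) ^ 2) (m / 2 * (2 * (x - a))) x := by
      simpa using (((hasDerivAt_id x).sub_const a).pow 2).const_mul (m / 2)
    have := ((h1.sub_const (a ^ (1 - γ))).sub h2).sub h3
    refine this.congr_deriv ?_
    rw [show (1 - γ - 1 : ℝ) = -γ by ring]
    simp only [hG'def]
    ring
  have hG'' : ∀ x : ℝ, 0 < x → HasDerivAt G' (γ * (γ - 1) * x ^ (-1 - γ) - m) x := by
    intro x hx
    have h1 : HasDerivAt (fun y : ℝ => y ^ (-γ)) ((-γ) * x ^ (-γ - 1)) x :=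
      Real.hasDerivAt_rpow_const (Or.inl hx.ne')
    have h2 : HasDerivAt (fun y : ℝ => m * (y - a)) m x := by
      simpa using ((hasDerivAt_id x).sub_const a).const_mul m
    have := ((h1.const_mul (1 - γ)).sub_const ((1 - γ) * a ^ (-γ))).sub h2
    refine this.congr_deriv ?_
    rw [show (-γ - 1 : ℝ) = -1 - γ by ring]
    ring
  have hGa : G a = 0 := by simp [hGdef]
  have hG'a : G' a = 0 := by simp [hG'def]
  have hmono : MonotoneOn G' (Set.Icc (min a b) (max a b)) := by
    apply monotoneOn_of_hasDerivWithinAt_nonneg (convex_Icc _ _)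
      (fun x hx => (hG'' x (hpos x hx.1)).continuousAt.continuousWithinAt)
      (fun x hx => ((hG'' x (hpos x (interior_subset hx).1)).hasDerivWithinAt).mono
        interior_subset)
    intro x hx
    rw [interior_Icc] at hx
    have := hmb x hx.1.le hx.2.le
    linarith
  have haI : a ∈ Set.Icc (min a b) (max a b) := ⟨min_le_left _ _, le_max_left _ _⟩
  have key : G b ≥ G a := by
    rcases le_total a b with hab | hab
    · have hmin : min a b = a := min_eq_left hab
      have hmax : max a b = b := max_eq_right hab
      have hGmono : MonotoneOn G (Set.Icc a b) := by
        apply monotoneOn_of_hasDerivWithinAt_nonneg (convex_Icc _ _)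
          (fun x hx => (hG x (ha.trans_le hx.1)).continuousAt.continuousWithinAt)
          (fun x hx => ((hG x (ha.trans_le (interior_subset hx).1)).hasDerivWithinAt).mono
            interior_subset)
        intro x hx
        rw [interior_Icc] at hx
        have hxI : x ∈ Set.Icc (min a b) (max a b) := by
          rw [hmin, hmax]; exact ⟨hx.1.le, hx.2.le⟩
        have := hmono haI hxI hx.1.le
        rw [hG'a] at this; exact this
      exact hGmono ⟨le_refl a, hab⟩ ⟨hab, le_refl b⟩ hab
    · have hmin : min a b = b := min_eq_right hab
      have hmax : max a b = a := max_eq_left hab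
      have hGanti : AntitoneOn G (Set.Icc b a) := by
        apply antitoneOn_of_hasDerivWithinAt_nonpos (convex_Icc _ _)
          (fun x hx => (hG x (hb.trans_le hx.1)).continuousAt.continuousWithinAt)
          (fun x hx => ((hG x (hb.trans_le (interior_subset hx).1)).hasDerivWithinAt).mono
            interior_subset)
        intro x hx
        rw [interior_Icc] at hx
        have hxI : x ∈ Set.Icc (min a b) (max a b) := by
          rw [hmin, hmax]; exact ⟨hx.1.le, hx.2.le⟩
        have := hmono hxI haI hx.2.le
        rw [hG'a] at this; exact this
      exact hGanti ⟨le_refl b, hab⟩ ⟨hab, le_refl a⟩ hab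
  rw [hGa] at key
  simp only [hGdef] at key
  linarith

lemma scalar_ineq (γ : ℝ) (hγ : 1 < γ) :
    (3:ℝ) ^ (1 - γ) + 2 * γ - 3 ≥ γ * (γ - 1) / 2 * (2:ℝ) ^ (-(2*γ)) := by
  have hlog3 : Real.log 3 ≤ 15/8 := by
    have h1 : Real.log 3 = 2 * Real.log (Real.sqrt 3) := by
      rw [Real.log_sqrt (by norm_num : (0:ℝ) ≤ 3)]; ring
    have h2 : Real.log (Real.sqrt 3) ≤ Real.sqrt 3 - 1 :=
      Real.log_le_sub_one_of_pos (Real.sqrt_pos.mpr (by norm_num))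
    have h3 : Real.sqrt 3 ≤ 7/4 := by
      rw [show (7/4:ℝ) = Real.sqrt ((7/4)^2) by rw [Real.sqrt_sq (by norm_num)]]
      exact Real.sqrt_le_sqrt (by norm_num)
    linarith
  have e1 : (3:ℝ) ^ (1 - γ) ≥ 1 + (1 - γ) * Real.log 3 := by
    rw [Real.rpow_def_of_pos (by norm_num : (0:ℝ) < 3)]
    have := Real.add_one_le_exp (Real.log 3 * (1 - γ))
    linarith
  have hlog2 : (0.6931471803:ℝ) < Real.log 2 := Real.log_two_gt_d9
  have e2 : γ ≤ (2:ℝ) ^ (2*γ - 2) := by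
    rw [Real.rpow_def_of_pos (by norm_num : (0:ℝ) < 2)]
    have h := Real.add_one_le_exp (Real.log 2 * (2*γ - 2))
    nlinarith
  have hp : (0:ℝ) < (2:ℝ) ^ (-(2*γ)) := Real.rpow_pos_of_pos (by norm_num) _
  have e3 : γ * (2:ℝ) ^ (-(2*γ)) ≤ 1/4 := by
    have h4 : (2:ℝ) ^ (2*γ-2) * (2:ℝ) ^ (-(2*γ)) = (2:ℝ) ^ (-2:ℝ) := by
      rw [← Real.rpow_add (by norm_num : (0:ℝ) < 2)]; congr 1; ring
    have h5 : (2:ℝ) ^ (-2:ℝ) = 1/4 := by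
      rw [show (-2:ℝ) = ((-2:ℤ):ℝ) by norm_num, Real.rpow_intCast]; norm_num
    calc γ * (2:ℝ) ^ (-(2*γ)) ≤ (2:ℝ) ^ (2*γ-2) * (2:ℝ) ^ (-(2*γ)) :=
          mul_le_mul_of_nonneg_right e2 hp.le
      _ = 1/4 := by rw [h4, h5]
  have h6 : (γ - 1) * Real.log 3 ≤ (γ - 1) * (15/8) :=
    mul_le_mul_of_nonneg_left hlog3 (by linarith)
  have h7 : (γ - 1) / 2 * (γ * (2:ℝ) ^ (-(2*γ))) ≤ (γ - 1) / 2 * (1/4) :=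
    mul_le_mul_of_nonneg_left e3 (by linarith)
  nlinarith

/-- Lower bounds on the Taylor remainder of `ψ(s) = s^{1-γ}`, `γ > 1`, at `τ̄ ≤ L`,
split according to whether `τ > 3L` or `τ ≤ 3L`. -/
theorem stmt_5 (γ L τ τb : ℝ) (hγ : 1 < γ) (hL : 0 < L)
    (hτ : 0 < τ) (hτb : 0 < τb) (hbL : τb ≤ L) :
    (τ > 3 * L →
      τ ^ (1 - γ) - τb ^ (1 - γ) - ((1 - γ) * τb ^ (-γ)) * (τ - τb)
        ≥ γ * (γ - 1) * (1 / 2) * (1 / 2 : ℝ) ^ (1 + γ) * (τ - τb) ^ (1 - γ)) ∧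
    (τ ≤ 3 * L →
      τ ^ (1 - γ) - τb ^ (1 - γ) - ((1 - γ) * τb ^ (-γ)) * (τ - τb)
        ≥ (γ * (γ - 1) / 2) * (3 * L) ^ (-1 - γ) * (τ - τb) ^ 2) := by
  constructor
  · -- Case τ > 3L
    intro h3L
    have hτ3 : 3 * τb < τ := by linarith
    have hd2 : 2 * τb ≤ τ - τb := by linarith
    have hdpos : 0 < τ - τb := by linarith
    have hg1 : (0:ℝ) < γ - 1 := by linarith
    -- tangent line at 3τb
    have tangent := aux_tangent γ 0 (3*τb) τ hγ (by positivity) hτ le_rfl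
      (fun x hx1 hx2 => by
        have hx : 0 < x := lt_of_lt_of_le (lt_min (by positivity) hτ) hx1
        positivity)
    rw [zero_div, zero_mul] at tangent
    have t2 : (3*τb) ^ (-γ) ≤ τb ^ (-γ) :=
      Real.rpow_le_rpow_of_nonpos hτb (by linarith) (by linarith)
    have t3 : ((3:ℝ)*τb) ^ (1-γ) = (3:ℝ) ^ (1-γ) * τb ^ (1-γ) :=
      Real.mul_rpow (by norm_num) hτb.le
    have t4 : τb ^ (-γ) * τb = τb ^ (1-γ) := by
      rw [show (1-γ:ℝ) = -γ + 1 by ring, Real.rpow_add hτb, Real.rpow_one]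
    have t5 : (0:ℝ) ≤ τ - 3*τb := by linarith
    have h6 : (3*τb) ^ (-γ) * (τ - 3*τb) ≤ τb ^ (-γ) * (τ - 3*τb) :=
      mul_le_mul_of_nonneg_right t2 t5
    have h7 : (γ-1) * ((3*τb) ^ (-γ) * (τ - 3*τb)) ≤ (γ-1) * (τb ^ (-γ) * (τ - 3*τb)) :=
      mul_le_mul_of_nonneg_left h6 hg1.le
    have t4' : (γ-1) * (τb ^ (-γ) * τb) = (γ-1) * τb ^ (1-γ) := by rw [t4]
    have step1 : τ ^ (1-γ) - τb ^ (1-γ) - ((1-γ) * τb ^ (-γ)) * (τ - τb)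
        ≥ ((3:ℝ) ^ (1-γ) + 2*γ - 3) * τb ^ (1-γ) := by
      nlinarith [tangent, t3, t4', h7]
    -- bound the right-hand side
    have r1 : (τ - τb) ^ (1-γ) ≤ (2*τb) ^ (1-γ) :=
      Real.rpow_le_rpow_of_nonpos (by positivity) hd2 (by linarith)
    have r2 : ((2:ℝ)*τb) ^ (1-γ) = (2:ℝ) ^ (1-γ) * τb ^ (1-γ) :=
      Real.mul_rpow (by norm_num) hτb.le
    have r3 : (1/2:ℝ) ^ (1+γ) * (2:ℝ) ^ (1-γ) = (2:ℝ) ^ (-(2*γ)) := by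
      rw [show (1/2:ℝ) = (2:ℝ) ^ (-1:ℝ) by rw [Real.rpow_neg_one]; norm_num,
          ← Real.rpow_mul (by norm_num : (0:ℝ) ≤ 2),
          ← Real.rpow_add (by norm_num : (0:ℝ) < 2)]
      congr 1
      ring
    have c0pos : (0:ℝ) < γ * (γ-1) * (1/2) * (1/2:ℝ) ^ (1+γ) := by positivity
    have rb : γ * (γ-1) * (1/2) * (1/2:ℝ) ^ (1+γ) * (τ - τb) ^ (1-γ)
        ≤ γ * (γ-1) / 2 * (2:ℝ) ^ (-(2*γ)) * τb ^ (1-γ) := by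
      have := mul_le_mul_of_nonneg_left (r1.trans_eq r2) c0pos.le
      calc γ * (γ-1) * (1/2) * (1/2:ℝ) ^ (1+γ) * (τ - τb) ^ (1-γ)
          ≤ γ * (γ-1) * (1/2) * (1/2:ℝ) ^ (1+γ) * ((2:ℝ) ^ (1-γ) * τb ^ (1-γ)) := this
        _ = γ * (γ-1) / 2 * ((1/2:ℝ) ^ (1+γ) * (2:ℝ) ^ (1-γ)) * τb ^ (1-γ) := by ring
        _ = γ * (γ-1) / 2 * (2:ℝ) ^ (-(2*γ)) * τb ^ (1-γ) := by rw [r3]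
    have sc := scalar_ineq γ hγ
    have hτbp : (0:ℝ) ≤ τb ^ (1-γ) := (Real.rpow_pos_of_pos hτb _).le
    have sc' : γ * (γ-1) / 2 * (2:ℝ) ^ (-(2*γ)) * τb ^ (1-γ)
        ≤ ((3:ℝ) ^ (1-γ) + 2*γ - 3) * τb ^ (1-γ) :=
      mul_le_mul_of_nonneg_right sc hτbp
    linarith
  · -- Case τ ≤ 3L
    intro h3L
    have hg1 : (0:ℝ) < γ - 1 := by linarith
    set m : ℝ := γ * (γ-1) * (3*L) ^ (-1-γ) with hm
    have hmpos : 0 < m := by positivity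
    have key := aux_tangent γ m τb τ hγ hτb hτ hmpos.le (fun x hx1 hx2 => by
      have hx : 0 < x := lt_of_lt_of_le (lt_min hτb hτ) hx1
      have hx3 : x ≤ 3*L := le_trans hx2 (max_le (by linarith) h3L)
      have : (3*L) ^ (-1-γ:ℝ) ≤ x ^ (-1-γ:ℝ) :=
        Real.rpow_le_rpow_of_nonpos hx hx3 (by linarith)
      have hgg : (0:ℝ) ≤ γ * (γ-1) := by positivity
      calc m = γ * (γ-1) * (3*L) ^ (-1-γ) := hm
        _ ≤ γ * (γ-1) * x ^ (-1-γ) := mul_le_mul_of_nonneg_left this hgg)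
    have : m / 2 * (τ - τb)^2 = γ * (γ-1) / 2 * (3*L) ^ (-1-γ) * (τ - τb)^2 := by
      rw [hm]; ring
    linarith
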